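/- Let G be a group with elements a, b, y satisfying y² = 1, yay = a⁻¹, yby = b⁻¹, and aba = bab. Then G-elements a and by generate the subgroup ⟨a, b, y⟩; in particular b and y lie in the subgroup generated by a and by. -/
import Mathlib


theorem stmt_11 {G : Type*} [Group G] (a b y : G)
    (hy : y ^ 2 = 1) (hya : y * a * y = a⁻¹) (hyb : y * b * y = b⁻¹)
    (hbraid : a * b * a = b * a * b) :
    Subgroup.closure ({a, b * y} : Set G) = Subgroup.closure ({a, b, y} : Set G) ∧
      b ∈ Subgroup.closure ({a, b * y} : Set G) ∧
      y ∈ Subgroup.closure ({a, b * y} : Set G) := by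
  have hyinv : y⁻¹ = y := by
    rw [inv_eq_iff_mul_eq_one, ← sq, hy]
  have hyy1 : y * y = 1 := by rw [← sq]; exact hy
  have hyay : y * a⁻¹ * y = a := by
    rw [← hya, show y * (y * a * y) * y = (y * y) * a * (y * y) by group, hyy1]
    simp
  have ha : a ∈ Subgroup.closure ({a, b * y} : Set G) :=
    Subgroup.subset_closure (by simp)
  have hby : b * y ∈ Subgroup.closure ({a, b * y} : Set G) :=
    Subgroup.subset_closure (by simp)
  have hb : b ∈ Subgroup.closure ({a, b * y} : Set G) := by
    have key : a * ((b * y) * a⁻¹ * (b * y)⁻¹) * a⁻¹ = b := by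
      have h1 : (b * y) * a⁻¹ * (b * y)⁻¹ = b * a * b⁻¹ := by
        rw [mul_inv_rev, hyinv]
        calc b * y * a⁻¹ * (y * b⁻¹) = b * (y * a⁻¹ * y) * b⁻¹ := by group
          _ = b * a * b⁻¹ := by rw [hyay]
      rw [h1]
      calc a * (b * a * b⁻¹) * a⁻¹ = (a * b * a) * b⁻¹ * a⁻¹ := by group
        _ = (b * a * b) * b⁻¹ * a⁻¹ := by rw [hbraid]
        _ = b := by group
    have m := mul_mem (mul_mem ha (mul_mem (mul_mem hby (inv_mem ha)) (inv_mem hby))) (inv_mem ha)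
    rwa [key] at m
  have hyy : y ∈ Subgroup.closure ({a, b * y} : Set G) := by
    have : b⁻¹ * (b * y) = y := by group
    have m := mul_mem (inv_mem hb) hby
    rwa [this] at m
  refine ⟨le_antisymm ?_ ?_, hb, hyy⟩
  · rw [Subgroup.closure_le]
    rintro x (rfl | rfl)
    · exact Subgroup.subset_closure (by simp)
    · exact mul_mem (Subgroup.subset_closure (by simp))
        (Subgroup.subset_closure (by simp))
  · rw [Subgroup.closure_le]
    rintro x (rfl | rfl | rfl)
    · exact ha
    · exact hb
    · exact hyy
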